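/- Let n ≥ 1 and λ > 0. For all x, y ∈ ℝⁿ, ‖σ_λ(x) − σ_λ(y)‖₂ ≤ (λ/2) ‖x − y‖₂, where ‖·‖₂ is the Euclidean norm. In particular the standard softmax σ₁ is (1/2)-Lipschitz in the Euclidean norm. -/

import Mathlib

open scoped ENNReal BigOperators

/-- The softmax function with inverse temperature `lam`. -/
noncomputable def softmax {n : ℕ} (lam : ℝ) (x : Fin n → ℝ) : Fin n → ℝ :=
  fun i => Real.exp (lam * x i) / ∑ j, Real.exp (lam * x j)

/-- The ℓ_p norm on `Fin n → ℝ`, for `p ∈ [1, ∞]`. -/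
noncomputable def lpNorm {n : ℕ} (p : ℝ≥0∞) (x : Fin n → ℝ) : ℝ :=
  if p = ⊤ then ⨆ i, |x i| else (∑ i, |x i| ^ p.toReal) ^ (1 / p.toReal)

/-- The ℓ_p-induced operator norm of a matrix. -/
noncomputable def opNorm {n m : ℕ} (p : ℝ≥0∞) (A : Matrix (Fin n) (Fin m) ℝ) : ℝ :=
  ⨆ v : {v : Fin m → ℝ // v ≠ 0}, lpNorm p (A.mulVec v.val) / lpNorm p v.val

/-- The matrix `Diag(s) - s sᵀ` (Jacobian of softmax with `lam = 1` at a point with value `s`). -/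
noncomputable def softmaxJac {n : ℕ} (s : Fin n → ℝ) : Matrix (Fin n) (Fin n) ℝ :=
  Matrix.diagonal s - Matrix.vecMulVec s s

/-- The open (interior of the) probability simplex. -/
def openSimplex (n : ℕ) : Set (Fin n → ℝ) :=
  {u | (∀ i, 0 < u i) ∧ ∑ i, u i = 1}

/-- The (closed) probability simplex. -/
def probSimplex (n : ℕ) : Set (Fin n → ℝ) :=
  {u | (∀ i, 0 ≤ u i) ∧ ∑ i, u i = 1}

/-- Weighted variance bound: for a probability vector `s`,
`∑ s i (u i - mean)² ≤ (1/2) ∑ u i²`. -/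
lemma claim2 {n : ℕ} (hn : 1 ≤ n) (s u : Fin n → ℝ) (hs0 : ∀ i, 0 ≤ s i)
    (hs1 : ∑ i, s i = 1) :
    ∑ i, s i * (u i - ∑ j, s j * u j) ^ 2 ≤ (1/2) * ∑ i, u i ^ 2 := by
  have hne : Nonempty (Fin n) := ⟨⟨0, hn⟩⟩
  set mu := ∑ j, s j * u j with hmu
  have key : ∀ c : ℝ, ∑ i, s i * (u i - c) ^ 2
      = (∑ i, s i * u i ^ 2) - 2 * c * mu + c ^ 2 := by
    intro c
    have : ∀ i : Fin n, s i * (u i - c) ^ 2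
        = s i * u i ^ 2 - 2 * c * (s i * u i) + c ^ 2 * s i := fun i => by ring
    rw [Finset.sum_congr rfl fun i _ => this i]
    rw [Finset.sum_add_distrib, Finset.sum_sub_distrib, ← Finset.mul_sum, ← Finset.mul_sum,
      hs1, mul_one]
  -- choose argmax and argmin
  obtain ⟨i0, -, hM⟩ := Finset.exists_max_image (Finset.univ : Finset (Fin n)) u
    ⟨Classical.arbitrary (Fin n), Finset.mem_univ _⟩
  obtain ⟨j0, -, hL⟩ := Finset.exists_min_image (Finset.univ : Finset (Fin n)) u
    ⟨Classical.arbitrary (Fin n), Finset.mem_univ _⟩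
  set M := u i0
  set L := u j0
  set c := (M + L) / 2 with hc
  have h1 : ∑ i, s i * (u i - mu) ^ 2 ≤ ∑ i, s i * (u i - c) ^ 2 := by
    rw [key mu, key c]; nlinarith [sq_nonneg (c - mu)]
  have h2 : ∑ i, s i * (u i - c) ^ 2 ≤ ((M - L)/2) ^ 2 := by
    calc ∑ i, s i * (u i - c) ^ 2 ≤ ∑ i, s i * ((M - L)/2) ^ 2 := by
          apply Finset.sum_le_sum
          intro i _
          have hMi := hM i (Finset.mem_univ i)
          have hLi := hL i (Finset.mem_univ i)
          have : (u i - c) ^ 2 ≤ ((M - L)/2) ^ 2 := by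
            rw [hc]; nlinarith
          exact mul_le_mul_of_nonneg_left this (hs0 i)
      _ = ((M - L)/2) ^ 2 := by rw [← Finset.sum_mul, hs1, one_mul]
  have h3 : ((M - L)/2) ^ 2 ≤ (1/2) * ∑ i, u i ^ 2 := by
    rcases eq_or_ne i0 j0 with h | h
    · have hML : M = L := by show u i0 = u j0; rw [h]
      rw [hML, sub_self]
      have : (0:ℝ) ≤ ∑ i, u i ^ 2 := Finset.sum_nonneg fun i _ => sq_nonneg _
      simp only [zero_div]
      nlinarith
    · have hsub : M ^ 2 + L ^ 2 ≤ ∑ i, u i ^ 2 := by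
        have : ∑ i ∈ ({i0, j0} : Finset (Fin n)), u i ^ 2 ≤ ∑ i, u i ^ 2 :=
          Finset.sum_le_sum_of_subset_of_nonneg (Finset.subset_univ _)
            (fun i _ _ => sq_nonneg _)
        rwa [Finset.sum_pair h] at this
      nlinarith [sq_nonneg (M + L)]
  linarith

/-- Core matrix bound: `‖(Diag s - s sᵀ) v‖² ≤ (1/4) ‖v‖²`. -/
lemma matBound {n : ℕ} (hn : 1 ≤ n) (s v : Fin n → ℝ) (hs0 : ∀ i, 0 ≤ s i)
    (hs1 : ∑ i, s i = 1) :
    ∑ i, (s i * (v i - ∑ j, s j * v j)) ^ 2 ≤ (1/4) * ∑ i, v i ^ 2 := by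
  set m := ∑ j, s j * v j with hm
  set w : Fin n → ℝ := fun i => s i * (v i - m) with hw
  set mw := ∑ j, s j * w j with hmw
  have hzero : ∑ i, s i * (v i - m) = 0 := by
    rw [Finset.sum_congr rfl (fun i _ => mul_sub (s i) (v i) m), Finset.sum_sub_distrib,
      ← Finset.sum_mul, hs1, one_mul, ← hm, sub_self]
  -- Cauchy–Schwarz setup
  set f : Fin n → ℝ := fun i => Real.sqrt (s i) * (v i - m) with hf
  set g : Fin n → ℝ := fun i => Real.sqrt (s i) * (w i - mw) with hg
  have hfg : ∑ i, f i * g i = ∑ i, w i ^ 2 := by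
    have : ∀ i : Fin n, f i * g i = s i * (v i - m) * w i - mw * (s i * (v i - m)) := by
      intro i
      have hss : Real.sqrt (s i) * Real.sqrt (s i) = s i := Real.mul_self_sqrt (hs0 i)
      calc f i * g i = (Real.sqrt (s i) * Real.sqrt (s i)) * ((v i - m) * (w i - mw)) := by
            simp only [hf, hg]; ring
        _ = s i * (v i - m) * w i - mw * (s i * (v i - m)) := by rw [hss]; ring
    rw [Finset.sum_congr rfl fun i _ => this i, Finset.sum_sub_distrib, ← Finset.mul_sum,
      hzero, mul_zero, sub_zero]
    exact Finset.sum_congr rfl fun i _ => by rw [hw]; ring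
  have hf2 : ∑ i, f i ^ 2 = ∑ i, s i * (v i - m) ^ 2 := by
    refine Finset.sum_congr rfl fun i _ => ?_
    rw [hf, mul_pow, Real.sq_sqrt (hs0 i)]
  have hg2 : ∑ i, g i ^ 2 = ∑ i, s i * (w i - mw) ^ 2 := by
    refine Finset.sum_congr rfl fun i _ => ?_
    rw [hg, mul_pow, Real.sq_sqrt (hs0 i)]
  have hCS := Finset.sum_mul_sq_le_sq_mul_sq Finset.univ f g
  rw [hfg, hf2, hg2] at hCS
  have hQv : ∑ i, s i * (v i - m) ^ 2 ≤ (1/2) * ∑ i, v i ^ 2 := claim2 hn s v hs0 hs1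
  have hQw : ∑ i, s i * (w i - mw) ^ 2 ≤ (1/2) * ∑ i, w i ^ 2 := claim2 hn s w hs0 hs1
  set S := ∑ i, w i ^ 2 with hS
  set T := ∑ i, v i ^ 2 with hT
  have hSpos : 0 ≤ S := Finset.sum_nonneg fun i _ => sq_nonneg _
  have hTpos : 0 ≤ T := Finset.sum_nonneg fun i _ => sq_nonneg _
  have hgoal : S ≤ (1/4) * T := by
    rcases eq_or_lt_of_le hSpos with h | h
    · rw [← h]; positivity
    · have h1 : S ^ 2 ≤ ((1/2) * T) * ((1/2) * S) := by
        calc S ^ 2 ≤ (∑ i, s i * (v i - m) ^ 2) * (∑ i, s i * (w i - mw) ^ 2) := hCS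
          _ ≤ ((1/2) * T) * ((1/2) * S) := by
              apply mul_le_mul hQv hQw
                (Finset.sum_nonneg fun i _ => mul_nonneg (hs0 i) (sq_nonneg _))
              positivity
      nlinarith
  exact hgoal

/-- The softmax Jacobian as a continuous linear map on Euclidean space. -/
noncomputable def smJ {n : ℕ} (lam : ℝ) (s : Fin n → ℝ) :
    EuclideanSpace ℝ (Fin n) →L[ℝ] EuclideanSpace ℝ (Fin n) :=
  LinearMap.toContinuousLinearMap
  { toFun := fun v => WithLp.toLp 2 (fun i => lam * (s i * (v i - ∑ j, s j * v j)) : Fin n → ℝ)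
    map_add' := by
      intro v u
      ext i
      simp only [PiLp.add_apply, PiLp.toLp_apply]
      have : ∑ j, s j * (v j + u j) = (∑ j, s j * v j) + ∑ j, s j * u j := by
        rw [← Finset.sum_add_distrib]
        exact Finset.sum_congr rfl fun j _ => by ring
      rw [this]; ring
    map_smul' := by
      intro c v
      ext i
      simp only [PiLp.toLp_apply, PiLp.smul_apply, smul_eq_mul, RingHom.id_apply]
      have : ∑ j, s j * (c * v j) = c * ∑ j, s j * v j := by
        rw [Finset.mul_sum]
        exact Finset.sum_congr rfl fun j _ => by ring
      rw [this]; ring }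

@[simp] lemma smJ_apply {n : ℕ} (lam : ℝ) (s : Fin n → ℝ)
    (v : EuclideanSpace ℝ (Fin n)) (i : Fin n) :
    smJ lam s v i = lam * (s i * (v i - ∑ j, s j * v j)) := rfl

lemma softmax_hasFDerivAt {n : ℕ} (hn : 1 ≤ n) (lam : ℝ) (x : EuclideanSpace ℝ (Fin n)) :
    HasFDerivAt (fun u : EuclideanSpace ℝ (Fin n) =>
      (WithLp.equiv 2 (Fin n → ℝ)).symm (softmax lam u))
      (smJ lam (softmax lam x)) x := by
  have hne : Nonempty (Fin n) := ⟨⟨0, hn⟩⟩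
  set S : EuclideanSpace ℝ (Fin n) → ℝ := fun u => ∑ j, Real.exp (lam * u j) with hSdef
  have hSpos : ∀ u, 0 < S u := fun u =>
    Finset.sum_pos (fun j _ => Real.exp_pos _) Finset.univ_nonempty
  -- derivative of each coordinate u ↦ lam * u j
  have hcoord : ∀ j : Fin n, HasFDerivAt (fun u : EuclideanSpace ℝ (Fin n) => lam * u j)
      (lam • (EuclideanSpace.proj j : EuclideanSpace ℝ (Fin n) →L[ℝ] ℝ)) x :=
    fun j => ((EuclideanSpace.proj (𝕜 := ℝ) j).hasFDerivAt (x := x)).const_mul lam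
  have hN : ∀ j : Fin n, HasFDerivAt (fun u : EuclideanSpace ℝ (Fin n) => Real.exp (lam * u j))
      (Real.exp (lam * x j) • (lam • (EuclideanSpace.proj j :
        EuclideanSpace ℝ (Fin n) →L[ℝ] ℝ))) x := fun j => (hcoord j).exp
  have hS : HasFDerivAt S (∑ j, Real.exp (lam * x j) • (lam • (EuclideanSpace.proj j :
      EuclideanSpace ℝ (Fin n) →L[ℝ] ℝ))) x := HasFDerivAt.fun_sum (fun j _ => hN j)
  set s : Fin n → ℝ := softmax lam x with hs
  have hSx : S x ≠ 0 := (hSpos x).ne'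
  set e := PiLp.continuousLinearEquiv 2 ℝ (fun _ : Fin n => ℝ) with he
  set Dpi : EuclideanSpace ℝ (Fin n) →L[ℝ] (Fin n → ℝ) :=
    (e : EuclideanSpace ℝ (Fin n) →L[ℝ] (Fin n → ℝ)).comp (smJ lam s) with hDpi
  have hA : ∀ v : EuclideanSpace ℝ (Fin n),
      ∑ j, s j * v j = (∑ j, Real.exp (lam * x j) * v j) / S x := by
    intro v
    rw [Finset.sum_div]
    refine Finset.sum_congr rfl fun j _ => ?_
    rw [hs]; unfold softmax; ring
  have hF0 : HasFDerivAt (fun u : EuclideanSpace ℝ (Fin n) => softmax lam u) Dpi x := by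
    apply hasFDerivAt_pi'.2
    intro i
    have hinv : HasFDerivAt (fun u : EuclideanSpace ℝ (Fin n) => (S u)⁻¹)
        ((ContinuousLinearMap.smulRight (1 : ℝ →L[ℝ] ℝ) (-(S x ^ 2)⁻¹)).comp
          (∑ j, Real.exp (lam * x j) • (lam • (EuclideanSpace.proj j :
            EuclideanSpace ℝ (Fin n) →L[ℝ] ℝ)))) x :=
      (hasFDerivAt_inv (hSpos x).ne').comp x hS
    have hquot := (hN i).mul hinv
    have heq : (fun u : EuclideanSpace ℝ (Fin n) => softmax lam u i)
        = fun u => Real.exp (lam * u i) * (S u)⁻¹ := by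
      funext u; unfold softmax; rw [div_eq_mul_inv]
    rw [show (fun u : EuclideanSpace ℝ (Fin n) => softmax lam u i)
        = fun u => Real.exp (lam * u i) * (S u)⁻¹ from heq]
    refine hquot.congr_fderiv ?_
    ext v
    simp only [ContinuousLinearMap.add_apply, ContinuousLinearMap.smul_apply,
      ContinuousLinearMap.comp_apply, ContinuousLinearMap.smulRight_apply,
      ContinuousLinearMap.one_apply, ContinuousLinearMap.sum_apply,
      PiLp.proj_apply, ContinuousLinearMap.proj_apply, smul_eq_mul,
      smJ_apply, hDpi, he, ContinuousLinearEquiv.coe_coe, PiLp.continuousLinearEquiv_apply]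
    have h1 : ∑ j, Real.exp (lam * x j) * (lam * v j)
        = lam * ∑ j, Real.exp (lam * x j) * v j := by
      rw [Finset.mul_sum]; exact Finset.sum_congr rfl fun j _ => by ring
    rw [h1, hA v]
    have hsi : s i = Real.exp (lam * x i) / S x := rfl
    rw [hsi]
    field_simp
    ring
  have htrans := ((PiLp.continuousLinearEquiv 2 ℝ (fun _ : Fin n => ℝ)).symm).comp_hasFDerivAt_iff.mpr hF0
  have hD : (((PiLp.continuousLinearEquiv 2 ℝ (fun _ : Fin n => ℝ)).symm :
        (Fin n → ℝ) →L[ℝ] EuclideanSpace ℝ (Fin n))).comp Dpi = smJ lam s := by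
    refine ContinuousLinearMap.ext fun v => ?_
    show (PiLp.continuousLinearEquiv 2 ℝ (fun _ : Fin n => ℝ)).symm (Dpi v) = smJ lam s v
    rw [hDpi]
    simp only [ContinuousLinearMap.comp_apply, ContinuousLinearEquiv.coe_coe, he,
      ContinuousLinearEquiv.symm_apply_apply]
  rw [hD] at htrans
  exact htrans

lemma softmax_sum_one {n : ℕ} (hn : 1 ≤ n) (lam : ℝ) (x : Fin n → ℝ) :
    ∑ i, softmax lam x i = 1 := by
  have hne : Nonempty (Fin n) := ⟨⟨0, hn⟩⟩
  have hS : 0 < ∑ j, Real.exp (lam * x j) :=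
    Finset.sum_pos (fun j _ => Real.exp_pos _) Finset.univ_nonempty
  unfold softmax
  rw [← Finset.sum_div, div_self hS.ne']

lemma softmax_nonneg {n : ℕ} (lam : ℝ) (x : Fin n → ℝ) (i : Fin n) :
    0 ≤ softmax lam x i := by
  unfold softmax
  positivity

lemma smJ_norm_le {n : ℕ} (hn : 1 ≤ n) (lam : ℝ) (hlam : 0 ≤ lam) (s : Fin n → ℝ)
    (hs0 : ∀ i, 0 ≤ s i) (hs1 : ∑ i, s i = 1) : ‖smJ lam s‖ ≤ lam / 2 := by
  apply ContinuousLinearMap.opNorm_le_bound _ (by positivity)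
  intro v
  rw [EuclideanSpace.norm_eq, EuclideanSpace.norm_eq]
  have hb := matBound hn s v hs0 hs1
  set T := ∑ i, v i ^ 2 with hT
  have hTnn : 0 ≤ T := Finset.sum_nonneg fun i _ => sq_nonneg _
  have h1 : ∑ i, ‖smJ lam s v i‖ ^ 2
      = lam ^ 2 * ∑ i, (s i * (v i - ∑ j, s j * v j)) ^ 2 := by
    rw [Finset.mul_sum]
    refine Finset.sum_congr rfl fun i _ => ?_
    rw [smJ_apply, Real.norm_eq_abs, sq_abs]; ring
  have h2 : ∑ i, ‖v i‖ ^ 2 = T := by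
    refine Finset.sum_congr rfl fun i _ => ?_
    rw [Real.norm_eq_abs, sq_abs]
  rw [h1, h2]
  calc √(lam ^ 2 * ∑ i, (s i * (v i - ∑ j, s j * v j)) ^ 2)
      ≤ √((lam / 2) ^ 2 * T) := by
        apply Real.sqrt_le_sqrt
        calc lam ^ 2 * ∑ i, (s i * (v i - ∑ j, s j * v j)) ^ 2
            ≤ lam ^ 2 * ((1/4) * T) :=
              mul_le_mul_of_nonneg_left hb (sq_nonneg lam)
          _ = (lam / 2) ^ 2 * T := by ring
    _ = (lam / 2) * √T := by
        rw [Real.sqrt_mul (sq_nonneg _), Real.sqrt_sq (by positivity)]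

lemma lpNorm_two_eq {n : ℕ} (z : Fin n → ℝ) :
    lpNorm 2 z = ‖(WithLp.equiv 2 (Fin n → ℝ)).symm z‖ := by
  rw [lpNorm, if_neg (by simp : (2 : ℝ≥0∞) ≠ ⊤), EuclideanSpace.norm_eq]
  have ht : (2 : ℝ≥0∞).toReal = 2 := by simp
  rw [ht, Real.sqrt_eq_rpow]
  congr 1
  refine Finset.sum_congr rfl fun i _ => ?_
  rw [show ((WithLp.equiv 2 (Fin n → ℝ)).symm z) i = z i from rfl,
    Real.norm_eq_abs, Real.rpow_two, sq]

/-- softmax with inverse temperature lam is (lam/2)-Lipschitz in the Euclidean norm. -/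
theorem softmax_lipschitz_l2 {n : ℕ} (hn : 1 ≤ n) (lam : ℝ) (hlam : 0 < lam)
    (x y : Fin n → ℝ) :
    lpNorm 2 (softmax lam x - softmax lam y) ≤ (lam / 2) * lpNorm 2 (x - y) := by
  
  set X := (WithLp.equiv 2 (Fin n → ℝ)).symm x with hX
  set Y := (WithLp.equiv 2 (Fin n → ℝ)).symm y with hY
  have mvt := convex_univ.norm_image_sub_le_of_norm_hasFDerivWithin_le
    (f := fun u : EuclideanSpace ℝ (Fin n) =>
      (WithLp.equiv 2 (Fin n → ℝ)).symm (softmax lam u))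
    (f' := fun u => smJ lam (softmax lam u)) (C := lam / 2)
    (fun u _ => (softmax_hasFDerivAt hn lam u).hasFDerivWithinAt)
    (fun u _ => smJ_norm_le hn lam hlam.le (softmax lam u)
      (softmax_nonneg lam u) (softmax_sum_one hn lam u))
    (Set.mem_univ Y) (Set.mem_univ X)
  rw [lpNorm_two_eq, lpNorm_two_eq]
  exact mvt
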